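/- Let v be odd and 6 < x ≤ v/2 with x odd. The sequence v-2, v-4, ..., x+2, x, 0, 2, 4, ..., x-1, x-2, x-4, ..., 1, v-1, v-3, ..., x+1 is a Hamiltonian path in K_v on {0,...,v-1} realizing the multiset {1, 2^{v-3}, x}. -/

import Mathlib

def pathLen (v p q : ℕ) : ℕ := min (Nat.dist p q) (v - Nat.dist p q)

def lengths (v : ℕ) (h : List ℕ) : Multiset ℕ :=
  (List.zipWith (pathLen v) h h.tail : List ℕ)

def IsHamPath (v : ℕ) (h : List ℕ) : Prop :=
  h.Nodup ∧ h.length = v ∧ ∀ p ∈ h, p < v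

/-- The sequence v-2, v-4, ..., x+2, x, 0, 2, 4, ..., x-1, x-2, x-4, ..., 1, v-1, v-3, ..., x+1. -/
def pathOddV (v x : ℕ) : List ℕ :=
  (List.range ((v - x - 2) / 2)).map (fun i => v - 2 - 2 * i) ++
  x :: (List.range ((x + 1) / 2)).map (fun i => 2 * i) ++
  (List.range ((x - 1) / 2)).map (fun i => x - 2 - 2 * i) ++
  (List.range ((v - x) / 2)).map (fun i => v - 1 - 2 * i)

lemma lengths_cons (v a b : ℕ) (t : List ℕ) :
    lengths v (a :: b :: t) = pathLen v a b ::ₘ lengths v (b :: t) := rfl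

lemma lengths_single (v a : ℕ) : lengths v [a] = 0 := rfl

lemma lengths_head (v p a : ℕ) {l rest : List ℕ} (h : l = a :: rest) :
    lengths v (p :: l) = pathLen v p a ::ₘ lengths v l := by subst h; rfl

lemma lengths_down (v : ℕ) (hv : 4 ≤ v) (k : ℕ) :
    ∀ (s : ℕ) (rest : List ℕ), 2 * k ≤ s →
    lengths v ((List.range k).map (fun i => s - 2 * i) ++ (s - 2 * k) :: rest) =
      Multiset.replicate k 2 + lengths v ((s - 2 * k) :: rest) := by
  induction k with
  | zero => intro s rest _; simp
  | succ k ih =>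
    intro s rest hs
    rw [List.range_succ, List.map_append]
    simp only [List.map_cons, List.map_nil]
    have h1 : (((List.range k).map (fun i => s - 2 * i) ++ [s - 2 * k]) ++ (s - 2 * (k+1)) :: rest)
        = (List.range k).map (fun i => s - 2 * i) ++ (s - 2 * k) :: ((s - 2 * (k+1)) :: rest) := by
      simp
    rw [h1, ih s _ (by omega), lengths_cons]
    have h2 : pathLen v (s - 2 * k) (s - 2 * (k+1)) = 2 := by
      simp [pathLen, Nat.dist]; omega
    rw [h2, Multiset.replicate_succ, Multiset.add_cons, Multiset.cons_add]

lemma lengths_up (v : ℕ) (hv : 4 ≤ v) (k : ℕ) :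
    ∀ (s : ℕ) (rest : List ℕ),
    lengths v ((List.range k).map (fun i => s + 2 * i) ++ (s + 2 * k) :: rest) =
      Multiset.replicate k 2 + lengths v ((s + 2 * k) :: rest) := by
  induction k with
  | zero => intro s rest; simp
  | succ k ih =>
    intro s rest
    rw [List.range_succ, List.map_append]
    simp only [List.map_cons, List.map_nil]
    have h1 : (((List.range k).map (fun i => s + 2 * i) ++ [s + 2 * k]) ++ (s + 2 * (k+1)) :: rest)
        = (List.range k).map (fun i => s + 2 * i) ++ (s + 2 * k) :: ((s + 2 * (k+1)) :: rest) := by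
      simp
    rw [h1, ih s _, lengths_cons]
    have h2 : pathLen v (s + 2 * k) (s + 2 * (k+1)) = 2 := by
      simp [pathLen, Nat.dist]; omega
    rw [h2, Multiset.replicate_succ, Multiset.add_cons, Multiset.cons_add]

lemma nodup_map_range {f : ℕ → ℕ} {k : ℕ} (h : ∀ i < k, ∀ j < k, f i = f j → i = j) :
    ((List.range k).map f).Nodup :=
  List.Nodup.map_on
    (fun i hi j hj => h i (List.mem_range.mp hi) j (List.mem_range.mp hj))
    List.nodup_range

theorem stmt_11 (v x : ℕ) (hv : Odd v) (hx : Odd x) (h6 : 6 < x) (hx2 : x ≤ v / 2) :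
    IsHamPath v (pathOddV v x) ∧
    lengths v (pathOddV v x) = 1 ::ₘ x ::ₘ Multiset.replicate (v - 3) 2 := by
  rw [Nat.odd_iff] at hv hx
  have hv4 : 4 ≤ v := by omega
  have h2x : 2 * x + 1 ≤ v := by omega
  refine ⟨⟨?_, ?_, ?_⟩, ?_⟩
  · -- Nodup
    simp only [pathOddV, List.nodup_append, List.nodup_cons, List.mem_append, List.mem_cons,
        List.mem_map, List.mem_range, List.disjoint_left, not_or, not_exists, not_and]
    refine ⟨⟨⟨?_, ⟨?_, ?_⟩, ?_⟩, ?_, ?_⟩, ?_, ?_⟩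
    · exact nodup_map_range (by intro i hi j hj h; omega)
    · intro i hi; omega
    · exact nodup_map_range (by intro i hi j hj h; omega)
    · rintro a ⟨i, hi, rfl⟩
      exact fun b hb => by rcases hb with rfl | ⟨j, hj, rfl⟩ <;> omega
    · exact nodup_map_range (by intro i hi j hj h; omega)
    · rintro a (⟨i, hi, rfl⟩ | rfl | ⟨i, hi, rfl⟩) j hj <;> omega
    · exact nodup_map_range (by intro i hi j hj h; omega)
    · rintro a ((⟨i, hi, rfl⟩ | rfl | ⟨i, hi, rfl⟩) | ⟨i, hi, rfl⟩) j hj <;> omega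
  · -- length
    simp [pathOddV]; omega
  · -- bounds
    intro p hp
    simp only [pathOddV, List.mem_append, List.mem_cons, List.mem_map, List.mem_range] at hp
    rcases hp with ((⟨i, hi, rfl⟩ | (rfl | ⟨i, hi, rfl⟩)) | ⟨i, hi, rfl⟩) | ⟨i, hi, rfl⟩ <;> omega
  · -- lengths
    have h0 : pathOddV v x = (List.range ((v-x-2)/2)).map (fun i => v - 2 - 2 * i) ++
        ((v - 2 - 2 * ((v-x-2)/2)) :: ((List.range ((x+1)/2)).map (fun i => 2 * i) ++
        ((List.range ((x-1)/2)).map (fun i => x - 2 - 2 * i) ++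
         (List.range ((v-x)/2)).map (fun i => v - 1 - 2 * i)))) := by
      rw [pathOddV, show v - 2 - 2 * ((v-x-2)/2) = x from by omega]
      simp [List.append_assoc]
    rw [h0, lengths_down v hv4 _ _ _ (by omega)]
    rw [show v - 2 - 2 * ((v-x-2)/2) = x from by omega]
    have hBcons : (List.range ((x+1)/2)).map (fun i => 2 * i) ++
        ((List.range ((x-1)/2)).map (fun i => x - 2 - 2 * i) ++
         (List.range ((v-x)/2)).map (fun i => v - 1 - 2 * i))
        = 0 :: ((List.range ((x+1)/2 - 1)).map (fun i => 2 * (i+1)) ++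
        ((List.range ((x-1)/2)).map (fun i => x - 2 - 2 * i) ++
         (List.range ((v-x)/2)).map (fun i => v - 1 - 2 * i))) := by
      conv_lhs => rw [show (x+1)/2 = ((x+1)/2 - 1) + 1 from by omega, List.range_succ_eq_map]
      simp [List.map_map, Function.comp]
    rw [lengths_head v x 0 hBcons]
    rw [show pathLen v x 0 = x from by simp [pathLen, Nat.dist]; omega]
    have hBsplit : (List.range ((x+1)/2)).map (fun i => 2 * i) ++
        ((List.range ((x-1)/2)).map (fun i => x - 2 - 2 * i) ++
         (List.range ((v-x)/2)).map (fun i => v - 1 - 2 * i))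
        = (List.range ((x+1)/2 - 1)).map (fun i => 0 + 2 * i) ++
        ((0 + 2 * ((x+1)/2 - 1)) :: ((List.range ((x-1)/2)).map (fun i => x - 2 - 2 * i) ++
         (List.range ((v-x)/2)).map (fun i => v - 1 - 2 * i))) := by
      conv_lhs => rw [show (x+1)/2 = ((x+1)/2 - 1) + 1 from by omega, List.range_succ]
      simp
    rw [hBsplit, lengths_up v hv4 _ _ _]
    rw [show 0 + 2 * ((x+1)/2 - 1) = x - 1 from by omega]
    have hCcons : (List.range ((x-1)/2)).map (fun i => x - 2 - 2 * i) ++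
         (List.range ((v-x)/2)).map (fun i => v - 1 - 2 * i)
        = (x - 2) :: ((List.range ((x-1)/2 - 1)).map (fun i => x - 2 - 2 * (i+1)) ++
         (List.range ((v-x)/2)).map (fun i => v - 1 - 2 * i)) := by
      conv_lhs => rw [show (x-1)/2 = ((x-1)/2 - 1) + 1 from by omega, List.range_succ_eq_map]
      simp [List.map_map, Function.comp]
    rw [lengths_head v (x-1) (x-2) hCcons]
    rw [show pathLen v (x-1) (x-2) = 1 from by simp [pathLen, Nat.dist]; omega]
    have hCsplit : (List.range ((x-1)/2)).map (fun i => x - 2 - 2 * i) ++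
         (List.range ((v-x)/2)).map (fun i => v - 1 - 2 * i)
        = (List.range ((x-1)/2 - 1)).map (fun i => x - 2 - 2 * i) ++
        ((x - 2 - 2 * ((x-1)/2 - 1)) :: (List.range ((v-x)/2)).map (fun i => v - 1 - 2 * i)) := by
      conv_lhs => rw [show (x-1)/2 = ((x-1)/2 - 1) + 1 from by omega, List.range_succ]
      simp
    rw [hCsplit, lengths_down v hv4 _ _ _ (by omega)]
    rw [show x - 2 - 2 * ((x-1)/2 - 1) = 1 from by omega]
    have hDcons : (List.range ((v-x)/2)).map (fun i => v - 1 - 2 * i)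
        = (v - 1) :: (List.range ((v-x)/2 - 1)).map (fun i => v - 1 - 2 * (i+1)) := by
      conv_lhs => rw [show (v-x)/2 = ((v-x)/2 - 1) + 1 from by omega, List.range_succ_eq_map]
      simp [List.map_map, Function.comp]
    rw [lengths_head v 1 (v-1) hDcons]
    rw [show pathLen v 1 (v-1) = 2 from by simp [pathLen, Nat.dist]; omega]
    have hDsplit : (List.range ((v-x)/2)).map (fun i => v - 1 - 2 * i)
        = (List.range ((v-x)/2 - 1)).map (fun i => v - 1 - 2 * i) ++
        ((v - 1 - 2 * ((v-x)/2 - 1)) :: []) := by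
      conv_lhs => rw [show (v-x)/2 = ((v-x)/2 - 1) + 1 from by omega, List.range_succ]
      simp
    rw [hDsplit, lengths_down v hv4 _ _ _ (by omega), lengths_single]
    ext y
    simp [Multiset.count_cons, Multiset.count_replicate]
    split_ifs <;> omega
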